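/- Limit-point test lemma: let W : ℕ → (subsets of 2^ℕ) and let S ⊆ ℕ^ℕ be a set whose closure S̄ in Baire space is compact. Assume that for every g ∈ S̄ the sequence (W_{g(n)})_n is nested, i.e., W_{g(n+1)} ⊆ W_{g(n)} for all n. Then for every Y ∈ ⋂_n ⋃_{f∈S} W_{f(n)} there exists g ∈ S̄ with Y ∈ ⋂_n W_{g(n)}. Consequently, if S̄ is countable and λ(⋂_n W_{g(n)}) = 0 for every g ∈ S̄, then λ(⋂_n ⋃_{f∈S} W_{f(n)}) = 0. -/
import Mathlib


open MeasureTheory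

/-- The cylinder of infinite binary sequences extending the finite string `σ`. -/
def cyl (σ : List Bool) : Set (ℕ → Bool) :=
  {X | ∀ i, (h : i < σ.length) → X i = σ.get ⟨i, h⟩}

/-- `μ` is the fair-coin measure: each cylinder `[σ]` has measure `2^{-|σ|}`. -/
def IsFairCoin (μ : Measure (ℕ → Bool)) : Prop :=
  ∀ σ : List Bool, μ (cyl σ) = (1 / 2) ^ σ.length

/-- Limit-point test lemma. -/
theorem stmt_9 (μ : Measure (ℕ → Bool)) (hμ : IsFairCoin μ)
    (W : ℕ → Set (ℕ → Bool)) (S : Set (ℕ → ℕ))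
    (hcpt : IsCompact (closure S))
    (hnest : ∀ g ∈ closure S, ∀ n : ℕ, W (g (n + 1)) ⊆ W (g n)) :
    (∀ Y ∈ ⋂ n, ⋃ f ∈ S, W (f n), ∃ g ∈ closure S, Y ∈ ⋂ n, W (g n)) ∧
      ((closure S).Countable → (∀ g ∈ closure S, μ (⋂ n, W (g n)) = 0) →
        μ (⋂ n, ⋃ f ∈ S, W (f n)) = 0) := by
  have hanti : ∀ g ∈ closure S, Antitone fun n => W (g n) := fun g hg =>
    antitone_nat_of_succ_le (fun n => hnest g hg n)
  have h1 : ∀ Y ∈ ⋂ n, ⋃ f ∈ S, W (f n), ∃ g ∈ closure S, Y ∈ ⋂ n, W (g n) := by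
    intro Y hY
    simp only [Set.mem_iInter, Set.mem_iUnion] at hY
    choose f hfS hfW using hY
    have hle : Filter.map f Filter.atTop ≤ Filter.principal (closure S) := by
      rw [Filter.le_principal_iff, Filter.mem_map]
      exact Filter.Eventually.of_forall (fun n => subset_closure (hfS n))
    obtain ⟨g, hg, hcl⟩ := hcpt.exists_clusterPt hle
    refine ⟨g, hg, Set.mem_iInter.2 fun m => ?_⟩
    have hU : {h : ℕ → ℕ | h m = g m} ∈ nhds g := by
      have : IsOpen ((fun h : ℕ → ℕ => h m) ⁻¹' {g m}) :=
        (isOpen_discrete {g m}).preimage (continuous_apply m)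
      exact this.mem_nhds rfl
    have hfreq : ∃ᶠ n in Filter.atTop, f n ∈ {h : ℕ → ℕ | h m = g m} :=
      mapClusterPt_iff_frequently.1 hcl _ hU
    obtain ⟨n, hnm, hn⟩ := (Filter.frequently_atTop.1 hfreq) m
    have : Y ∈ W (f n m) := hanti (f n) (subset_closure (hfS n)) hnm (hfW n)
    rwa [hn] at this
  refine ⟨h1, fun hcount hnull => ?_⟩
  have hsub : (⋂ n, ⋃ f ∈ S, W (f n)) ⊆ ⋃ g ∈ closure S, ⋂ n, W (g n) := by
    intro Y hY
    obtain ⟨g, hg, hY'⟩ := h1 Y hY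
    exact Set.mem_biUnion hg hY'
  exact measure_mono_null hsub ((measure_biUnion_null_iff hcount).mpr hnull)
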